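/- The function U(x) = ln( c_N / (1 + |x|^(N/(N-1)))^N ), where c_N = N^N (N/(N-1))^(N-1), solves the Liouville equation -Δ_N U = e^U on ℝ^N \ {0}, and satisfies ∫_{ℝ^N} e^{U(x)} dx = c_N V_N < ∞. -/

import Mathlib

open MeasureTheory
open scoped RealInnerProductSpace
open Filter Set Topology


private lemma grad_aux (n : ℕ) {c : ℝ} (hcpos : 0 < c) {p : ℝ} (hp1 : 1 < p)
    (U : EuclideanSpace ℝ (Fin (n+2)) → ℝ)
    (hU : ∀ x, U x = Real.log (c / (1 + ‖x‖ ^ p) ^ (n+2)))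
    (x : EuclideanSpace ℝ (Fin (n+2))) :
    HasGradientAt U ((-(((n:ℝ)+2) * p) * ‖x‖ ^ (p-2) / (1 + ‖x‖ ^ p)) • x) x := by
  have hD : ∀ y : EuclideanSpace ℝ (Fin (n+2)), (0:ℝ) < 1 + ‖y‖ ^ p := fun y => by
    have := Real.rpow_nonneg (norm_nonneg y) p; linarith
  have hUeq : U = fun y => Real.log c - ((n:ℝ)+2) * Real.log (1 + ‖y‖ ^ p) := by
    funext y
    rw [hU y, Real.log_div hcpos.ne' (pow_ne_zero _ (hD y).ne'), Real.log_pow]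
    push_cast; ring
  rw [hasGradientAt_iff_hasFDerivAt, hUeq]
  have h1 := ((((hasFDerivAt_norm_rpow x hp1).const_add 1).log (hD x).ne').const_mul
    (((n:ℝ)+2))).const_sub (Real.log c)
  have heq : (InnerProductSpace.toDual ℝ (EuclideanSpace ℝ (Fin (n+2))))
      ((-(((n:ℝ)+2) * p) * ‖x‖ ^ (p-2) / (1 + ‖x‖ ^ p)) • x)
      = -((((n:ℝ)+2)) • (1 + ‖x‖ ^ p)⁻¹ • (p * ‖x‖ ^ (p - 2)) • (innerSL ℝ) x) := by
    ext v
    simp only [InnerProductSpace.toDual_apply_apply, real_inner_smul_left, ContinuousLinearMap.neg_apply,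
      ContinuousLinearMap.coe_smul', Pi.smul_apply, innerSL_apply_apply, smul_eq_mul]
    field_simp [(hD x).ne']
  rw [heq]
  exact h1

private lemma scalar_final (n : ℕ) (a rp r2 p : ℝ) (hD : (1:ℝ) + rp ≠ 0) (hr2 : r2 ≠ 0)
    (hn1 : ((n:ℝ)+1) ≠ 0) (hpn : ((n:ℝ)+1) * p = (n:ℝ)+2) :
    -( ((n:ℝ)+2) * (-a * (((1:ℝ)+rp)^(n+1))⁻¹)
       + (-a * (-((n:ℝ)+1) * (((1:ℝ)+rp)^(n+2))⁻¹ * (p * (rp/r2)))) * r2 )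
      = ((n:ℝ)+2) * a / ((1:ℝ)+rp)^(n+2) := by
  have hp' : p = ((n:ℝ)+2)/((n:ℝ)+1) := by field_simp [hn1]; linarith [hpn]
  rw [hp']
  field_simp
  ring

private lemma liouville_pde (n : ℕ) {c : ℝ}
    (hc : c = ((n:ℝ)+2) ^ (n+2) * (((n:ℝ)+2) / ((n:ℝ)+1)) ^ (n+1))
    {p : ℝ} (hp : p = ((n:ℝ)+2) / ((n:ℝ)+1))
    (U : EuclideanSpace ℝ (Fin (n+2)) → ℝ)
    (hU : ∀ x, U x = Real.log (c / (1 + ‖x‖ ^ p) ^ (n+2)))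
    (x : EuclideanSpace ℝ (Fin (n+2))) (hx : x ≠ 0) :
    -(∑ i : Fin (n+2),
        ⟪fderiv ℝ (fun y => ‖gradient U y‖ ^ n • gradient U y) x (EuclideanSpace.single i (1:ℝ)),
          EuclideanSpace.single i (1:ℝ)⟫) = Real.exp (U x) := by
  have hn1 : (0:ℝ) < (n:ℝ)+1 := by positivity
  have hp1 : 1 < p := by rw [hp, lt_div_iff₀ hn1]; linarith
  have hppos : 0 < p := lt_trans one_pos hp1
  have hcpos : 0 < c := by rw [hc]; positivity
  have hD : ∀ y : EuclideanSpace ℝ (Fin (n+2)), (0:ℝ) < 1 + ‖y‖ ^ p := fun y => by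
    have := Real.rpow_nonneg (norm_nonneg y) p; linarith
  set A : ℝ := ((n:ℝ)+2) * p with hA
  have hApos : 0 < A := by positivity
  have hkey : (p - 1) * ((n:ℝ)+1) = 1 := by rw [hp]; field_simp; norm_num
  -- Step B : closed form for the nonlinear gradient term away from 0
  have hGeq : ∀ y : EuclideanSpace ℝ (Fin (n+2)), y ≠ 0 →
      ‖gradient U y‖ ^ n • gradient U y
        = (-(A^(n+1)) * (1 + ‖y‖ ^ p) ^ (-((n:ℝ)+1))) • y := by
    intro y hy
    have hry : (0:ℝ) < ‖y‖ := norm_pos_iff.mpr hy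
    rw [(grad_aux n hcpos hp1 U hU y).gradient, norm_smul, smul_smul]
    congr 1
    set s : ℝ := ‖y‖ with hs
    set Dy : ℝ := 1 + s ^ p with hDy
    have hDypos : 0 < Dy := hD y
    have habs : ‖-(((n:ℝ)+2) * p) * s ^ (p-2) / Dy‖ = A * s ^ (p-2) / Dy := by
      rw [Real.norm_eq_abs, abs_div, abs_of_pos hDypos, abs_mul, abs_neg,
        abs_of_pos (by positivity : (0:ℝ) < ((n:ℝ)+2)*p),
        abs_of_nonneg (Real.rpow_nonneg hry.le _)]
    rw [habs]
    have key : (s ^ (p-2) * s) ^ n * s ^ (p-2) = 1 := by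
      rw [show s ^ (p-2) * s = s ^ (p-2) * s ^ (1:ℝ) by rw [Real.rpow_one],
        ← Real.rpow_add hry, ← Real.rpow_natCast (s ^ (p-2+1)) n, ← Real.rpow_mul hry.le,
        ← Real.rpow_add hry,
        show (p-2+1) * (n:ℝ) + (p-2) = 0 by linear_combination hkey, Real.rpow_zero]
    calc (A * s ^ (p-2) / Dy * s) ^ n * (-(((n:ℝ)+2) * p) * s ^ (p-2) / Dy)
        = -((A^n * A) * ((s^(p-2)*s)^n * s^(p-2))) / (Dy^n * Dy) := by
          rw [show A * s^(p-2)/Dy*s = A*(s^(p-2)*s)/Dy from by ring, div_pow, mul_pow]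
          field_simp
          ring
      _ = -(A^(n+1)) * Dy ^ (-((n:ℝ)+1)) := by
          rw [key, mul_one, ← pow_succ, ← pow_succ,
            show -((n:ℝ)+1) = -(((n+1:ℕ)):ℝ) by push_cast; ring,
            Real.rpow_neg hDypos.le, Real.rpow_natCast]
          field_simp
  -- Step C : derivative of the closed form
  have hG : HasFDerivAt
      (fun y : EuclideanSpace ℝ (Fin (n+2)) => (-(A^(n+1)) * (1 + ‖y‖ ^ p) ^ (-((n:ℝ)+1))) • y)
      ((-(A^(n+1)) * (1 + ‖x‖ ^ p) ^ (-((n:ℝ)+1))) • ContinuousLinearMap.id ℝ _ +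
        ((-(A^(n+1))) • ((-((n:ℝ)+1) * (1 + ‖x‖ ^ p) ^ (-((n:ℝ)+1) - 1)) •
          ((p * ‖x‖ ^ (p-2)) • innerSL ℝ x))).smulRight x) x := by
    exact ((((hasFDerivAt_norm_rpow x hp1).const_add 1).rpow_const
      (Or.inl (hD x).ne')).const_mul (-(A^(n+1)))).smul (hasFDerivAt_id x)
  have hfd : fderiv ℝ (fun y => ‖gradient U y‖ ^ n • gradient U y) x
      = fderiv ℝ (fun y : EuclideanSpace ℝ (Fin (n+2)) =>
          (-(A^(n+1)) * (1 + ‖y‖ ^ p) ^ (-((n:ℝ)+1))) • y) x := by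
    apply Filter.EventuallyEq.fderiv_eq
    filter_upwards [isOpen_compl_singleton.mem_nhds (by simpa using hx)] with y hy
    exact hGeq y hy
  rw [hfd, hG.fderiv]
  simp only [ContinuousLinearMap.add_apply, ContinuousLinearMap.coe_smul', Pi.smul_apply,
    ContinuousLinearMap.coe_id', id_eq, ContinuousLinearMap.smulRight_apply,
    ContinuousLinearMap.smul_apply, innerSL_apply_apply, smul_eq_mul, inner_add_left,
    real_inner_smul_left, EuclideanSpace.inner_single_left, EuclideanSpace.inner_single_right,
    EuclideanSpace.single_apply, map_one, conj_trivial, PiLp.smul_apply, one_mul,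
    if_pos, Finset.sum_add_distrib, Finset.sum_const, Finset.card_univ, Fintype.card_fin,
    nsmul_eq_mul, mul_one]
  have hr : (0:ℝ) < ‖x‖ := norm_pos_iff.mpr hx
  have hxx : ∑ i : Fin (n+2), x i * x i = ‖x‖^2 := by
    have h := real_inner_self_eq_norm_sq x
    rw [← h, PiLp.inner_apply]
    exact Finset.sum_congr rfl fun i _ => by simp [mul_comm]; ring
  have hsum : ∑ i : Fin (n+2), -A ^ (n + 1) *
        (-((n:ℝ) + 1) * (1 + ‖x‖ ^ p) ^ (-((n:ℝ) + 1) - 1) * (p * ‖x‖ ^ (p - 2) * x i)) * x i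
      = -A ^ (n + 1) * (-((n:ℝ) + 1) * (1 + ‖x‖ ^ p) ^ (-((n:ℝ) + 1) - 1) * (p * ‖x‖ ^ (p - 2)))
          * ‖x‖^2 := by
    rw [← hxx, Finset.mul_sum]
    exact Finset.sum_congr rfl fun i _ => by ring
  rw [hsum, hU x, Real.exp_log (div_pos hcpos (pow_pos (hD x) _))]
  have hD1 : (1+‖x‖^p) ^ (-((n:ℝ)+1)) = ((1+‖x‖^p)^(n+1:ℕ))⁻¹ := by
    rw [show -((n:ℝ)+1) = -(((n+1:ℕ)):ℝ) by push_cast; ring,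
      Real.rpow_neg (hD x).le, Real.rpow_natCast]
  have hD2 : (1+‖x‖^p) ^ (-((n:ℝ)+1)-1) = ((1+‖x‖^p)^(n+2:ℕ))⁻¹ := by
    rw [show -((n:ℝ)+1)-1 = -(((n+2:ℕ)):ℝ) by push_cast; ring,
      Real.rpow_neg (hD x).le, Real.rpow_natCast]
  have hrp2 : ‖x‖ ^ (p-2) = ‖x‖ ^ p / ‖x‖^2 := by
    rw [eq_div_iff (pow_ne_zero 2 hr.ne'),
      show ((‖x‖:ℝ))^2 = ‖x‖^(2:ℝ) by rw [← Real.rpow_natCast ‖x‖ 2]; norm_num,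
      ← Real.rpow_add hr]
    congr 1
    ring
  have hpn : ((n:ℝ)+1) * p = (n:ℝ)+2 := by rw [hp]; field_simp
  have hcA : c = ((n:ℝ)+2) * A^(n+1) := by rw [hc, hA, hp, mul_pow, pow_succ]; ring
  rw [hD1, hD2, hrp2, hcA]
  push_cast
  exact scalar_final n (A^(n+1)) (‖x‖^p) (‖x‖^2) p (hD x).ne' (pow_ne_zero 2 hr.ne')
    (by positivity) hpn

private lemma oneD_integral (n : ℕ) {c : ℝ} (hcpos : 0 < c)
    {p : ℝ} (hp : p = ((n:ℝ)+2) / ((n:ℝ)+1)) :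
    ∫ y in Ioi (0:ℝ), y ^ (n+1) * (c / (1 + y ^ p) ^ (n+2)) = c / ((n:ℝ)+2) := by
  have hn1 : (0:ℝ) < (n:ℝ)+1 := by positivity
  have hp1 : 1 < p := by rw [hp, lt_div_iff₀ hn1]; linarith
  have hppos : 0 < p := lt_trans one_pos hp1
  have hpn : ((n:ℝ)+1) * p = (n:ℝ)+2 := by rw [hp]; field_simp
  have hD : ∀ y : ℝ, 0 ≤ y → (0:ℝ) < 1 + y ^ p := fun y hy => by
    have := Real.rpow_nonneg hy p; linarith
  set g : ℝ → ℝ := fun y => (c/((n:ℝ)+2)) * (y^p / (1+y^p))^(n+1) with hg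
  have hderiv : ∀ y ∈ Ioi (0:ℝ), HasDerivAt g (y ^ (n+1) * (c / (1 + y ^ p) ^ (n+2))) y := by
    intro y hy
    have hy0 : (0:ℝ) < y := hy
    have hDy : (0:ℝ) < 1 + y ^ p := hD y hy0.le
    have hyp : HasDerivAt (fun z : ℝ => z ^ p) (p * y^(p-1)) y :=
      Real.hasDerivAt_rpow_const (Or.inl hy0.ne')
    have hfrac : HasDerivAt (fun z : ℝ => z^p/(1+z^p))
        ((p*y^(p-1) * (1+y^p) - y^p * (p*y^(p-1))) / (1+y^p)^2) y :=
      hyp.div (hyp.const_add 1) hDy.ne'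
    have h2 := ((hfrac.pow (n+1)).const_mul (c/((n:ℝ)+2)))
    refine h2.congr_deriv ?_
    symm
    have key2 : (y^p)^n * y^(p-1) = y^(n+1:ℕ) := by
      rw [← Real.rpow_natCast (y^p) n, ← Real.rpow_mul hy0.le, ← Real.rpow_add hy0,
        ← Real.rpow_natCast y (n+1)]
      congr 1
      push_cast
      linear_combination hpn
    simp only [Nat.add_sub_cancel] at h2 ⊢
    push_cast
    rw [div_pow, ← key2, ← hpn]
    field_simp [hppos.ne', hn1.ne', hDy.ne']
    ring
  have hcont : ContinuousWithinAt g (Ici (0:ℝ)) 0 := by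
    apply ContinuousAt.continuousWithinAt
    have h0 : ContinuousAt (fun y : ℝ => y ^ p) 0 :=
      Real.continuousAt_rpow_const 0 p (Or.inr hppos.le)
    have h1 : ContinuousAt (fun y : ℝ => 1 + y ^ p) 0 := continuousAt_const.add h0
    have hne : (1:ℝ) + (0:ℝ) ^ p ≠ 0 := by
      rw [Real.zero_rpow hppos.ne']; norm_num
    exact ((h0.div h1 hne).pow (n+1)).const_mul _
  have g'pos : ∀ y ∈ Ioi (0:ℝ), 0 ≤ y ^ (n+1) * (c / (1 + y ^ p) ^ (n+2)) := by
    intro y hy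
    have hy0 : (0:ℝ) < y := hy
    have := hD y hy0.le
    positivity
  have htend : Tendsto g atTop (𝓝 (c / ((n:ℝ)+2))) := by
    have hfr : Tendsto (fun y : ℝ => y ^ p / (1+y^p)) atTop (𝓝 1) := by
      have hb : Tendsto (fun y : ℝ => 1 + y ^ p) atTop atTop :=
        tendsto_atTop_add_const_left _ 1 (tendsto_rpow_atTop hppos)
      have h1 : Tendsto (fun y : ℝ => 1 - (1+y^p)⁻¹) atTop (𝓝 (1 - 0)) :=
        tendsto_const_nhds.sub hb.inv_tendsto_atTop
    -- rewrite
      rw [show (1:ℝ) - 0 = 1 by norm_num] at h1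
      apply h1.congr'
      filter_upwards [eventually_gt_atTop (0:ℝ)] with y hy
      have hDy := (hD y hy.le).ne'
      field_simp
      ring
    have := (hfr.pow (n+1)).const_mul (c/((n:ℝ)+2))
    simpa using this
  have hint := integral_Ioi_of_hasDerivAt_of_nonneg hcont hderiv g'pos htend
  rw [hint, hg]
  simp [Real.zero_rpow hppos.ne']

private lemma full_integral (n : ℕ) {c : ℝ} (hcpos : 0 < c)
    {p : ℝ} (hp : p = ((n:ℝ)+2) / ((n:ℝ)+1)) :
    Integrable (fun x : EuclideanSpace ℝ (Fin (n+2)) => c / (1 + ‖x‖ ^ p) ^ (n+2)) ∧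
    ∫ x : EuclideanSpace ℝ (Fin (n+2)), c / (1 + ‖x‖ ^ p) ^ (n+2)
      = c * (volume (Metric.ball (0 : EuclideanSpace ℝ (Fin (n+2))) 1)).toReal := by
  have hn1 : (0:ℝ) < (n:ℝ)+1 := by positivity
  have hp1 : 1 < p := by rw [hp, lt_div_iff₀ hn1]; linarith
  have hppos : 0 < p := lt_trans one_pos hp1
  have hD : ∀ y : ℝ, 0 ≤ y → (0:ℝ) < 1 + y ^ p := fun y hy => by
    have := Real.rpow_nonneg hy p; linarith
  have hdim : Module.finrank ℝ (EuclideanSpace ℝ (Fin (n+2))) = n + 2 :=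
    finrank_euclideanSpace_fin
  have hcont : Continuous (fun x : EuclideanSpace ℝ (Fin (n+2)) => c / (1 + ‖x‖ ^ p) ^ (n+2)) := by
    apply continuous_const.div
    · exact (continuous_const.add (continuous_norm.rpow_const (fun x => Or.inr hppos.le))).pow (n+2)
    · exact fun x => (pow_ne_zero _ (hD ‖x‖ (norm_nonneg x)).ne')
  have hintg : Integrable (fun x : EuclideanSpace ℝ (Fin (n+2)) =>
      c * (2:ℝ) ^ (p*((n:ℝ)+2)) * (1 + ‖x‖) ^ (-(p*((n:ℝ)+2)))) := by
    apply Integrable.const_mul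
    apply integrable_one_add_norm
    rw [hdim]
    push_cast
    nlinarith [hp1, hn1]
  have hbound : ∀ x : EuclideanSpace ℝ (Fin (n+2)),
      ‖c / (1 + ‖x‖ ^ p) ^ (n+2)‖ ≤ c * (2:ℝ) ^ (p*((n:ℝ)+2)) * (1 + ‖x‖) ^ (-(p*((n:ℝ)+2))) := by
    intro x
    set t : ℝ := ‖x‖ with ht
    have ht0 : 0 ≤ t := norm_nonneg x
    have hDt : (0:ℝ) < 1 + t ^ p := hD t ht0
    have h1t : (0:ℝ) < 1 + t := by linarith
    have key : (1+t)^p ≤ 2^p * (1+t^p) := by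
      rcases le_total t 1 with h|h
      · calc (1+t)^p ≤ (2:ℝ)^p := Real.rpow_le_rpow (by linarith) (by linarith) hppos.le
          _ ≤ 2^p * (1+t^p) := le_mul_of_one_le_right (by positivity) (by
              have := Real.rpow_nonneg ht0 p; linarith)
      · calc (1+t)^p ≤ ((2:ℝ)*t)^p := Real.rpow_le_rpow (by linarith) (by linarith) hppos.le
          _ = 2^p * t^p := Real.mul_rpow (by norm_num) ht0
          _ ≤ 2^p * (1+t^p) := by
              have h2p : (0:ℝ) < (2:ℝ)^p := Real.rpow_pos_of_pos (by norm_num) p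
              nlinarith
    have hkeyN : ((1+t)^p)^(n+2) ≤ ((2:ℝ)^p)^(n+2) * (1+t^p)^(n+2) := by
      rw [← mul_pow]
      exact pow_le_pow_left₀ (Real.rpow_nonneg h1t.le p) key (n+2)
    have e1 : (1+t) ^ (-(p*((n:ℝ)+2))) = (((1+t)^p)^(n+2:ℕ))⁻¹ := by
      rw [show p*((n:ℝ)+2) = p * (((n+2:ℕ)):ℝ) by push_cast; ring,
        Real.rpow_neg h1t.le, Real.rpow_mul h1t.le, Real.rpow_natCast]
    have e2 : (2:ℝ) ^ (p*((n:ℝ)+2)) = ((2:ℝ)^p)^(n+2:ℕ) := by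
      rw [show p*((n:ℝ)+2) = p * (((n+2:ℕ)):ℝ) by push_cast; ring,
        Real.rpow_mul (by norm_num), Real.rpow_natCast]
    rw [Real.norm_eq_abs, abs_of_nonneg (by positivity), e1, e2]
    have hY : (0:ℝ) < ((1+t)^p)^(n+2) := pow_pos (Real.rpow_pos_of_pos h1t p) _
    rw [show c * ((2:ℝ)^p)^(n+2) * (((1+t)^p)^(n+2))⁻¹
        = (c * ((2:ℝ)^p)^(n+2)) / ((1+t)^p)^(n+2) by rw [div_eq_mul_inv],
      div_le_div_iff₀ (pow_pos hDt _) hY]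
    calc c * ((1+t)^p)^(n+2) ≤ c * (((2:ℝ)^p)^(n+2) * (1+t^p)^(n+2)) :=
          mul_le_mul_of_nonneg_left hkeyN hcpos.le
      _ = c * ((2:ℝ)^p)^(n+2) * (1+t^p)^(n+2) := by ring
  have hint : Integrable (fun x : EuclideanSpace ℝ (Fin (n+2)) => c / (1 + ‖x‖ ^ p) ^ (n+2)) :=
    hintg.mono' hcont.aestronglyMeasurable (Filter.Eventually.of_forall hbound)
  refine ⟨hint, ?_⟩
  have hpolar := integral_fun_norm_addHaar
    (volume : Measure (EuclideanSpace ℝ (Fin (n+2)))) (fun t => c / (1 + t ^ p) ^ (n+2))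
  rw [hdim] at hpolar
  rw [show (∫ x : EuclideanSpace ℝ (Fin (n+2)), c / (1 + ‖x‖ ^ p) ^ (n+2))
      = ∫ x : EuclideanSpace ℝ (Fin (n+2)), (fun t => c / (1 + t ^ p) ^ (n+2)) ‖x‖ from rfl,
    hpolar]
  have h1d := oneD_integral n hcpos hp
  simp only [smul_eq_mul, show n+2-1 = n+1 from rfl]
  rw [show (∫ y in Ioi (0:ℝ), y ^ (n+1) * (c / (1 + y ^ p) ^ (n+2))) = c / ((n:ℝ)+2) from h1d,
    nsmul_eq_mul]
  push_cast
  field_simp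
  ring
  rfl

/-- The function `U(x) = ln(c_N / (1+|x|^(N/(N-1)))^N)` with `c_N = N^N (N/(N-1))^(N-1)`
solves the Liouville equation `-Δ_N U = e^U` on `ℝ^N \ {0}` and satisfies
`∫ e^U = c_N V_N < ∞`. -/
theorem stmt11 (N : ℕ) (hN : 2 ≤ N) (c V : ℝ)
    (hc : c = (N : ℝ) ^ N * ((N : ℝ) / ((N : ℝ) - 1)) ^ (N - 1))
    (hV : V = (volume (Metric.ball (0 : EuclideanSpace ℝ (Fin N)) 1)).toReal)
    (U : EuclideanSpace ℝ (Fin N) → ℝ)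
    (hU : ∀ x, U x = Real.log (c / (1 + ‖x‖ ^ ((N : ℝ) / ((N : ℝ) - 1))) ^ N)) :
    (∀ x : EuclideanSpace ℝ (Fin N), x ≠ 0 →
      -(∑ i : Fin N,
          ⟪fderiv ℝ (fun y => ‖gradient U y‖ ^ (N - 2) • gradient U y) x
              (EuclideanSpace.single i (1 : ℝ)),
            EuclideanSpace.single i (1 : ℝ)⟫) = Real.exp (U x)) ∧
    Integrable (fun x : EuclideanSpace ℝ (Fin N) => Real.exp (U x)) ∧
    (∫ x : EuclideanSpace ℝ (Fin N), Real.exp (U x)) = c * V := by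
  obtain ⟨n, rfl⟩ : ∃ n, N = n + 2 := ⟨N - 2, by omega⟩
  have hp' : (((n+2:ℕ)):ℝ) / ((((n+2:ℕ)):ℝ) - 1) = ((n:ℝ)+2) / ((n:ℝ)+1) := by
    push_cast; congr 1; ring
  have hc' : c = ((n:ℝ)+2) ^ (n+2) * (((n:ℝ)+2) / ((n:ℝ)+1)) ^ (n+1) := by
    rw [hc, show n+2-1 = n+1 from rfl]
    push_cast
    ring_nf
  have hcpos : 0 < c := by rw [hc']; positivity
  have hD : ∀ y : EuclideanSpace ℝ (Fin (n+2)),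
      (0:ℝ) < 1 + ‖y‖ ^ ((((n+2:ℕ)):ℝ) / ((((n+2:ℕ)):ℝ) - 1)) := fun y => by
    have := Real.rpow_nonneg (norm_nonneg y) ((((n+2:ℕ)):ℝ) / ((((n+2:ℕ)):ℝ) - 1)); linarith
  have hfun : (fun x : EuclideanSpace ℝ (Fin (n+2)) => Real.exp (U x))
      = fun x => c / (1 + ‖x‖ ^ ((((n+2:ℕ)):ℝ) / ((((n+2:ℕ)):ℝ) - 1))) ^ (n+2) :=
    funext fun x => by rw [hU x, Real.exp_log (div_pos hcpos (pow_pos (hD x) _))]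
  obtain ⟨hInt, hVal⟩ := full_integral n hcpos hp'
  refine ⟨fun x hx => ?_, ?_, ?_⟩
  · exact liouville_pde n hc' hp' U hU x hx
  · rw [hfun]; exact hInt
  · rw [hfun, hVal, hV]
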